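/- For integers p ≥ q ≥ r ≥ 0, the polynomial P_p^{q−r}·P_r^{p−q} − P_q^{p−r} lies in S; equivalently its substitution x_j ↦ x_j² is a sum of squares of polynomials (Lyapunov's inequality as a sum of squares). -/

import Mathlib

open Finset MvPolynomial

/-- The normalized `m`-th power sum `P_m = (1/n) Σ_j x_j^m`. -/
noncomputable def psum (n : ℕ) (m : ℕ) : MvPolynomial (Fin n) ℝ :=
  ((n : ℝ))⁻¹ • ∑ j, X j ^ m

section SosLemmas

variable {R : Type*} [CommRing R]

lemma isSumSq_one' : IsSumSq (1 : R) := by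
  simpa using IsSumSq.sq_add (1 : R) 0 IsSumSq.zero

lemma IsSumSq.mul_self_mul' {y : R} (a : R) (hy : IsSumSq y) : IsSumSq (a * a * y) := by
  induction hy with
  | zero => simpa using IsSumSq.zero
  | @sq_add b S hS ih =>
      have h : a * a * (b * b + S) = (a * b) * (a * b) + a * a * S := by ring
      rw [h]
      exact IsSumSq.sq_add _ ih

lemma IsSumSq.mul' {x y : R} (hx : IsSumSq x) (hy : IsSumSq y) : IsSumSq (x * y) := by
  induction hx with
  | zero => simpa using IsSumSq.zero
  | @sq_add a S hS ih =>
      rw [add_mul]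
      exact (hy.mul_self_mul' a).add ih

lemma IsSumSq.pow' {x : R} (hx : IsSumSq x) (k : ℕ) : IsSumSq (x ^ k) := by
  induction k with
  | zero => simpa using isSumSq_one'
  | succ k ih => rw [pow_succ]; exact ih.mul' hx

lemma isSumSq_sq' (a : R) : IsSumSq (a ^ 2) := by
  simpa [sq] using IsSumSq.sq_add a 0 IsSumSq.zero

lemma isSumSq_sum' {ι : Type*} (s : Finset ι) (f : ι → R)
    (h : ∀ i ∈ s, IsSumSq (f i)) : IsSumSq (∑ i ∈ s, f i) :=
  Finset.sum_induction f IsSumSq (fun _ _ ha hb => ha.add hb) IsSumSq.zero h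

lemma isSumSq_pow_sub_pow' {x e : R} (hx : IsSumSq x) (he : IsSumSq e) (k : ℕ) :
    IsSumSq ((x + e) ^ k - x ^ k) := by
  induction k with
  | zero => simpa using IsSumSq.zero
  | succ k ih =>
      have h : (x + e) ^ (k + 1) - x ^ (k + 1)
          = ((x + e) ^ k - x ^ k) * x + (x + e) ^ k * e := by ring
      rw [h]
      exact (ih.mul' hx).add (((hx.add he).pow' k).mul' he)

/-- Key two-variable SOS lemma. -/
lemma keyA (u v : R) (b t t' : ℕ) :
    IsSumSq ((u ^ 2 * v ^ 2) ^ b * ((u ^ 2) ^ t - (v ^ 2) ^ t)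
      * ((u ^ 2) ^ t' - (v ^ 2) ^ t')) := by
  have geom : ∀ s : ℕ, (u ^ 2) ^ s - (v ^ 2) ^ s
      = (∑ k ∈ range s, (u ^ 2) ^ k * (v ^ 2) ^ (s - 1 - k)) * (u ^ 2 - v ^ 2) :=
    fun s => (geom_sum₂_mul (u ^ 2) (v ^ 2) s).symm
  have hgeom : ∀ s : ℕ, IsSumSq (∑ k ∈ range s, (u ^ 2) ^ k * (v ^ 2) ^ (s - 1 - k)) := by
    intro s
    have h := IsSumSq.sum_mul_self (range s) (fun k => u ^ k * v ^ (s - 1 - k))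
    convert h using 2 with k
    · rfl
    · rfl
    · ring
  rw [geom t, geom t']
  have hEq : (u ^ 2 * v ^ 2) ^ b
      * ((∑ k ∈ range t, (u ^ 2) ^ k * (v ^ 2) ^ (t - 1 - k)) * (u ^ 2 - v ^ 2))
      * ((∑ k ∈ range t', (u ^ 2) ^ k * (v ^ 2) ^ (t' - 1 - k)) * (u ^ 2 - v ^ 2))
      = ((u * v) ^ b * (u ^ 2 - v ^ 2)) ^ 2
        * ((∑ k ∈ range t, (u ^ 2) ^ k * (v ^ 2) ^ (t - 1 - k))
          * (∑ k ∈ range t', (u ^ 2) ^ k * (v ^ 2) ^ (t' - 1 - k))) := by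
    ring
  rw [hEq]
  exact (isSumSq_sq' _).mul' ((hgeom t).mul' (hgeom t'))

end SosLemmas

noncomputable abbrev phi (n : ℕ) :
    MvPolynomial (Fin n) ℝ →ₐ[ℝ] MvPolynomial (Fin n) ℝ :=
  bind₁ (fun j : Fin n => (X j : MvPolynomial (Fin n) ℝ) ^ 2)

lemma phi_psum (n m : ℕ) :
    phi n (_root_.psum n m) = C ((n : ℝ)⁻¹) * ∑ j, (X j : MvPolynomial (Fin n) ℝ) ^ (2 * m) := by
  unfold _root_.psum
  rw [map_smul, map_sum, smul_eq_C_mul]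
  congr 1
  refine Finset.sum_congr rfl fun j _ => ?_
  rw [map_pow, bind₁_X_right, ← pow_mul]

lemma psum_sos (n m : ℕ) : IsSumSq (phi n (_root_.psum n m)) := by
  have h := IsSumSq.sum_mul_self (univ : Finset (Fin n))
    (fun j => C (Real.sqrt ((n : ℝ)⁻¹)) * (X j : MvPolynomial (Fin n) ℝ) ^ m)
  have hC : (C (Real.sqrt ((n : ℝ)⁻¹)) : MvPolynomial (Fin n) ℝ)
      * C (Real.sqrt ((n : ℝ)⁻¹)) = C ((n : ℝ)⁻¹) := by
    rw [← map_mul, Real.mul_self_sqrt (by positivity)]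
  have hEq : ∑ j, (C (Real.sqrt ((n : ℝ)⁻¹)) * (X j : MvPolynomial (Fin n) ℝ) ^ m)
      * (C (Real.sqrt ((n : ℝ)⁻¹)) * (X j : MvPolynomial (Fin n) ℝ) ^ m)
      = phi n (_root_.psum n m) := by
    rw [phi_psum, Finset.mul_sum]
    refine Finset.sum_congr rfl fun j _ => ?_
    calc (C (Real.sqrt ((n : ℝ)⁻¹)) * (X j : MvPolynomial (Fin n) ℝ) ^ m)
          * (C (Real.sqrt ((n : ℝ)⁻¹)) * X j ^ m)
        = (C (Real.sqrt ((n : ℝ)⁻¹)) * C (Real.sqrt ((n : ℝ)⁻¹)))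
            * (X j ^ m * X j ^ m) := by ring
      _ = C ((n : ℝ)⁻¹) * X j ^ (2 * m) := by rw [hC, ← pow_add, two_mul]
  exact hEq ▸ h

/-- The two-factor exchange lemma. -/
lemma keyB (n a b c d : ℕ) (hcb : b ≤ c) (hdb : b ≤ d) (h : a + b = c + d) :
    IsSumSq (phi n (_root_.psum n a * _root_.psum n b - _root_.psum n c * _root_.psum n d)) := by
  obtain ⟨t, rfl⟩ : ∃ t, c = b + t := ⟨c - b, by omega⟩
  obtain ⟨t', rfl⟩ : ∃ t', d = b + t' := ⟨d - b, by omega⟩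
  obtain rfl : a = b + t + t' := by omega
  set Q : ℕ → MvPolynomial (Fin n) ℝ :=
    fun m => ∑ j, (X j : MvPolynomial (Fin n) ℝ) ^ (2 * m) with hQdef
  -- the double sum of SOS pieces
  set G : Fin n → Fin n → MvPolynomial (Fin n) ℝ := fun i j =>
    ((X i : MvPolynomial (Fin n) ℝ) ^ 2 * (X j : MvPolynomial (Fin n) ℝ) ^ 2) ^ b
      * (((X i : MvPolynomial (Fin n) ℝ) ^ 2) ^ t
        - ((X j : MvPolynomial (Fin n) ℝ) ^ 2) ^ t)
      * (((X i : MvPolynomial (Fin n) ℝ) ^ 2) ^ t'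
        - ((X j : MvPolynomial (Fin n) ℝ) ^ 2) ^ t') with hGdef
  have hg : IsSumSq (∑ i, ∑ j, G i j) := by
    refine isSumSq_sum' _ _ fun i _ => isSumSq_sum' _ _ fun j _ => keyA _ _ _ _ _
  -- expand G pointwise
  have hGexp : ∀ i j : Fin n, G i j
      = (X i : MvPolynomial (Fin n) ℝ) ^ (2 * (b + t + t')) * (X j) ^ (2 * b)
        + (X i) ^ (2 * b) * (X j) ^ (2 * (b + t + t'))
        - ((X i) ^ (2 * (b + t)) * (X j) ^ (2 * (b + t'))
          + (X i) ^ (2 * (b + t')) * (X j) ^ (2 * (b + t))) := by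
    intro i j
    rw [hGdef]
    ring
  -- the double sum equals the symmetrized Q-expression
  have hsum : ∑ i, ∑ j, G i j
      = Q (b + t + t') * Q b + Q b * Q (b + t + t')
        - (Q (b + t) * Q (b + t') + Q (b + t') * Q (b + t)) := by
    simp only [hGexp, hQdef]
    rw [Finset.sum_mul_sum, Finset.sum_mul_sum, Finset.sum_mul_sum, Finset.sum_mul_sum]
    simp [Finset.sum_add_distrib, Finset.sum_sub_distrib]
  have h2 : (C ((2 : ℝ)⁻¹) : MvPolynomial (Fin n) ℝ) + C ((2 : ℝ)⁻¹) = 1 := by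
    rw [← map_add]
    norm_num
  have hCC : (C ((n : ℝ)⁻¹ * Real.sqrt 2⁻¹) : MvPolynomial (Fin n) ℝ) ^ 2
      = C ((n : ℝ)⁻¹) * C ((n : ℝ)⁻¹) * C ((2 : ℝ)⁻¹) := by
    rw [sq, ← map_mul, ← map_mul, ← map_mul]
    congr 1
    have : Real.sqrt 2⁻¹ * Real.sqrt 2⁻¹ = 2⁻¹ := Real.mul_self_sqrt (by norm_num)
    nlinarith [this]
  have hmain : phi n (_root_.psum n (b + t + t') * _root_.psum n b - _root_.psum n (b + t) * _root_.psum n (b + t'))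
      = (C ((n : ℝ)⁻¹ * Real.sqrt 2⁻¹) : MvPolynomial (Fin n) ℝ) ^ 2
        * ∑ i, ∑ j, G i j := by
    have hQm : ∀ m, phi n (_root_.psum n m) = C ((n : ℝ)⁻¹) * Q m := by
      intro m; rw [phi_psum, hQdef]
    rw [map_sub, map_mul, map_mul, hQm, hQm, hQm, hQm, hsum, hCC]
    linear_combination (-(C ((n : ℝ)⁻¹) * C ((n : ℝ)⁻¹)
      * (Q (b + t + t') * Q b - Q (b + t) * Q (b + t')))) * h2
  rw [hmain]
  exact (isSumSq_sq' _).mul' hg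

lemma keyC (n : ℕ) : ∀ N i j r : ℕ, i + j ≤ N →
    IsSumSq (phi n (_root_.psum n (r + i + j) ^ i * _root_.psum n r ^ j - _root_.psum n (r + i) ^ (i + j))) := by
  intro N
  induction N with
  | zero =>
      intro i j r h
      obtain rfl : i = 0 := by omega
      obtain rfl : j = 0 := by omega
      simp
  | succ N IH =>
      intro i j r hij
      rcases Nat.eq_zero_or_pos i with rfl | hi
      · simpa using IsSumSq.zero
      rcases Nat.eq_zero_or_pos j with rfl | hj
      · simpa using IsSumSq.zero
      have hAs : IsSumSq (phi n (_root_.psum n (r + i + j))) := psum_sos n _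
      have hBs : IsSumSq (phi n (_root_.psum n r)) := psum_sos n _
      have hCs : IsSumSq (phi n (_root_.psum n (r + i))) := psum_sos n _
      have hDs : IsSumSq (phi n (_root_.psum n (r + j))) := psum_sos n _
      rcases le_or_gt i j with hle | hlt
      · obtain ⟨m, rfl⟩ : ∃ m, j = i + m := ⟨j - i, by omega⟩
        have hrec := IH i m r (by omega)
        simp only [map_sub, map_mul, map_pow] at hrec ⊢
        set A := phi n (_root_.psum n (r + i + (i + m)))
        set B := phi n (_root_.psum n r)
        set Cq := phi n (_root_.psum n (r + i))
        have hDeq : phi n (_root_.psum n (r + i + m)) = phi n (_root_.psum n (r + (i + m))) := by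
          rw [show r + i + m = r + (i + m) by omega]
        rw [hDeq] at hrec
        set D := phi n (_root_.psum n (r + (i + m)))
        have hE' : IsSumSq (A * B - Cq * D) := by
          have : phi n (_root_.psum n (r + i + (i + m))) * phi n (_root_.psum n r)
              - phi n (_root_.psum n (r + i)) * phi n (_root_.psum n (r + (i + m)))
              = A * B - Cq * D := rfl
          rw [← this]
          simpa [show r + (i + m) = r + i + m from by omega, map_sub, map_mul] using
            keyB n (r + i + (i + m)) r (r + i) (r + (i + m)) (by omega) (by omega) (by omega)
        have hkey : A ^ i * B ^ (i + m) - Cq ^ (i + (i + m))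
            = Cq ^ i * (D ^ i * B ^ m - Cq ^ (i + m))
              + ((Cq * D + (A * B - Cq * D)) ^ i - (Cq * D) ^ i) * B ^ m := by
          ring
        rw [hkey]
        exact ((hCs.pow' i).mul' hrec).add
          ((isSumSq_pow_sub_pow' (hCs.mul' hDs) hE' i).mul' (hBs.pow' m))
      · obtain ⟨m, rfl⟩ : ∃ m, i = j + m := ⟨i - j, by omega⟩
        have hrec := IH m j (r + j) (by omega)
        simp only [map_sub, map_mul, map_pow] at hrec ⊢
        have e1 : r + j + m + j = r + (j + m) + j := by omega
        have e2 : r + j + m = r + (j + m) := by omega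
        rw [e1, e2] at hrec
        set A := phi n (_root_.psum n (r + (j + m) + j))
        set B := phi n (_root_.psum n r)
        set Cq := phi n (_root_.psum n (r + (j + m)))
        set D := phi n (_root_.psum n (r + j))
        have hE' : IsSumSq (A * B - Cq * D) := by
          simpa [map_sub, map_mul] using
            keyB n (r + (j + m) + j) r (r + (j + m)) (r + j) (by omega) (by omega) (by omega)
        have hrec' : IsSumSq (A ^ m * D ^ j - Cq ^ (m + j)) := hrec
        have hkey : A ^ (j + m) * B ^ j - Cq ^ (j + m + j)
            = Cq ^ j * (A ^ m * D ^ j - Cq ^ (m + j))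
              + ((Cq * D + (A * B - Cq * D)) ^ j - (Cq * D) ^ j) * A ^ m := by
          ring
        rw [hkey]
        exact ((hCs.pow' j).mul' hrec').add
          ((isSumSq_pow_sub_pow' (hCs.mul' hDs) hE' j).mul' (hAs.pow' m))

theorem lyapunov_sos (n p q r : ℕ) (hqp : q ≤ p) (hrq : r ≤ q) :
    IsSumSq (bind₁ (fun j : Fin n => (X j : MvPolynomial (Fin n) ℝ) ^ 2)
      (psum n p ^ (q - r) * psum n r ^ (p - q) - psum n q ^ (p - r))) := by
  obtain ⟨i, rfl⟩ : ∃ i, q = r + i := ⟨q - r, by omega⟩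
  obtain ⟨j, rfl⟩ : ∃ j, p = r + i + j := ⟨p - (r + i), by omega⟩
  have h1 : r + i - r = i := by omega
  have h2 : r + i + j - (r + i) = j := by omega
  have h3 : r + i + j - r = i + j := by omega
  rw [h1, h2, h3]
  exact keyC n (i + j) i j r le_rfl
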